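/- Square-matrix version of Theorem 1: Let k be an algebraically closed field and let q₁, …, q_m be homogeneous quadratic polynomials in the variables X₁, …, X_n over k. Then there exist a natural number a and a reduced matrix pencil P = (a, a; α₁, …, α_n) consisting of square matrices (i.e., n linear maps α_i : k^a → k^a), together with a bijection from the set ε(P) of equivalence classes of eigenvectors of P onto the projective zero set {(λ₁ : … : λ_n) ∈ ℙ(k^n) : q_j(λ₁, …, λ_n) = 0 for all j = 1, …, m}, which sends the class of an eigenvector v to the eigenvalue of v. -/

import Mathlib

/-!
A matrix pencil `P = (a, b; α₁, …, α_n)` over `k` is a family of `n` linear maps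
`α_i : k^a → k^b`.  It is reduced if `⋂_i ker α_i = 0`.  A (nonzero) vector
`v ∈ k^a` is an eigenvector of `P` if `span{α₁(v), …, α_n(v)} ⊆ k^b` is
one-dimensional; eigenvectors are equivalent iff they are proportional, so the
set `ε(P)` of equivalence classes of eigenvectors is a subset of `ℙ(k^a)`.
If `v` is an eigenvector and `w ≠ 0` with `α_i(v) = λ_i w` for all `i`, the
point `(λ₁ : … : λ_n) ∈ ℙ(k^n)` is the eigenvalue of `v`.
-/

open Module Submodule

namespace EigSqAux

variable {k : Type*} [Field k] {n m : ℕ}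

/-- The rank-one symmetric tensor attached to a vector. -/
def nu (lam : Fin n → k) : Fin n → Fin n → k := fun s t => lam s * lam t

lemma exists_ne_zero {lam : Fin n → k} (h : lam ≠ 0) : ∃ s, lam s ≠ 0 := by
  by_contra hc
  push_neg at hc
  exact h (funext fun s => hc s)

lemma nu_ne_zero {lam : Fin n → k} (h : lam ≠ 0) : nu lam ≠ 0 := by
  obtain ⟨s, hs⟩ := exists_ne_zero h
  intro hc
  exact hs (by simpa [nu, mul_self_eq_zero] using congrFun (congrFun hc s) s)

lemma nu_smul (c : k) (lam : Fin n → k) : nu (c • lam) = (c * c) • nu lam := by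
  funext s t
  simp only [nu, Pi.smul_apply, smul_eq_mul]
  ring

lemma nu_proportional {lam lam' : Fin n → k} {c : k} (hlam : lam ≠ 0)
    (h : nu lam = c • nu lam') : ∃ t : k, t ≠ 0 ∧ lam = t • lam' := by
  obtain ⟨s0, hs0⟩ := exists_ne_zero hlam
  have h00 : lam s0 * lam s0 = c * (lam' s0 * lam' s0) := by
    simpa [nu] using congrFun (congrFun h s0) s0
  have hcl : c * (lam' s0 * lam' s0) ≠ 0 := h00 ▸ mul_ne_zero hs0 hs0
  have hc : c ≠ 0 := fun hz => hcl (by rw [hz, zero_mul])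
  have hl0 : lam' s0 ≠ 0 := fun hz => hcl (by rw [hz]; ring)
  refine ⟨c * lam' s0 * (lam s0)⁻¹,
    mul_ne_zero (mul_ne_zero hc hl0) (inv_ne_zero hs0), ?_⟩
  funext s
  have hss0 : lam s * lam s0 = c * (lam' s * lam' s0) := by
    simpa [nu] using congrFun (congrFun h s) s0
  have hdiv : lam s = lam s * lam s0 * (lam s0)⁻¹ := by field_simp
  rw [Pi.smul_apply, smul_eq_mul, hdiv, hss0]
  ring

variable (C : Fin m → Fin n → Fin n → k)

/-- The zero cone of the quadrics given by coefficients `C` (without 0). -/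
def Zset : Set (Fin n → k) :=
  {lam | lam ≠ 0 ∧ ∀ j, ∑ s, ∑ t, C j s t * (lam s * lam t) = 0}

lemma Zset_smul {lam : Fin n → k} (h : lam ∈ Zset C) {c : k} (hc : c ≠ 0) :
    c • lam ∈ Zset C := by
  refine ⟨smul_ne_zero hc h.1, fun j => ?_⟩
  have hkey : ∑ s, ∑ t, C j s t * ((c • lam) s * (c • lam) t)
      = (c * c) * ∑ s, ∑ t, C j s t * (lam s * lam t) := by
    rw [Finset.mul_sum]
    refine Finset.sum_congr rfl fun s _ => ?_
    rw [Finset.mul_sum]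
    refine Finset.sum_congr rfl fun t _ => ?_
    simp only [Pi.smul_apply, smul_eq_mul]
    ring
  rw [hkey, h.2 j, mul_zero]

/-- The span of the rank-one tensors of points of the cone. -/
def Wsp : Submodule k (Fin n → Fin n → k) := span k (nu '' Zset C)

/-- The span of the cone itself. -/
def Lsp : Submodule k (Fin n → k) := span k (Zset C)

def rowL (i : Fin n) : (Fin n → Fin n → k) →ₗ[k] (Fin n → k) := LinearMap.proj i

def entryL (s t : Fin n) : (Fin n → Fin n → k) →ₗ[k] k :=
  (LinearMap.proj t : (Fin n → k) →ₗ[k] k).comp (rowL s)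

lemma entryL_apply (s t : Fin n) (v : Fin n → Fin n → k) : entryL s t v = v s t := rfl

def colL (t0 : Fin n) : (Fin n → Fin n → k) →ₗ[k] (Fin n → k) :=
  LinearMap.pi fun s => entryL s t0

lemma rowL_nu (lam : Fin n → k) (i : Fin n) : rowL i (nu lam) = lam i • lam := by
  funext t
  simp [rowL, nu, smul_eq_mul]

lemma colL_nu (lam : Fin n → k) (t0 : Fin n) : colL t0 (nu lam) = lam t0 • lam := by
  funext s
  simp [colL, nu, smul_eq_mul, LinearMap.pi_apply, entryL, rowL, mul_comm]

def Phi (j : Fin m) : (Fin n → Fin n → k) →ₗ[k] k :=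
  ∑ s, ∑ t, C j s t • entryL s t

lemma Phi_apply (j : Fin m) (v : Fin n → Fin n → k) :
    Phi C j v = ∑ s, ∑ t, C j s t * v s t := by
  simp [Phi, LinearMap.sum_apply, entryL_apply, smul_eq_mul]

lemma Wsp_symm {v : Fin n → Fin n → k} (hv : v ∈ Wsp C) (s t : Fin n) :
    v s t = v t s := by
  have hle : Wsp C ≤ LinearMap.ker (entryL s t - entryL t s) := by
    rw [Wsp, span_le]
    rintro x ⟨lam, hlam, rfl⟩
    simp [LinearMap.mem_ker, entryL, rowL, nu, mul_comm]
  have h2 := hle hv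
  rw [LinearMap.mem_ker, LinearMap.sub_apply, sub_eq_zero] at h2
  exact h2

lemma Wsp_quad {v : Fin n → Fin n → k} (hv : v ∈ Wsp C) (j : Fin m) :
    ∑ s, ∑ t, C j s t * v s t = 0 := by
  have hle : Wsp C ≤ LinearMap.ker (Phi C j) := by
    rw [Wsp, span_le]
    rintro x ⟨lam, hlam, rfl⟩
    have h2 := hlam.2 j
    simp only [SetLike.mem_coe, LinearMap.mem_ker, Phi_apply, nu]
    exact h2
  have := hle hv
  rwa [LinearMap.mem_ker, Phi_apply] at this

lemma Wsp_row {v : Fin n → Fin n → k} (hv : v ∈ Wsp C) (i : Fin n) :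
    v i ∈ Lsp C := by
  have hle : Wsp C ≤ Submodule.comap (rowL (k := k) i) (Lsp C) := by
    rw [Wsp, span_le]
    rintro x ⟨lam, hlam, rfl⟩
    simp only [SetLike.mem_coe, Submodule.mem_comap, rowL_nu]
    exact smul_mem _ _ (subset_span hlam)
  exact hle hv

lemma finrank_Lsp_le : finrank k (Lsp C) ≤ finrank k (Wsp C) := by
  obtain ⟨b, hbsub, hbspan, hbli⟩ := exists_linearIndependent k (nu '' Zset C)
  have hbfin : b.Finite := hbli.setFinite
  haveI := hbfin.fintype
  choose g hg1 hg2 using fun x : b => hbsub x.2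
  have hZsub : Zset C ⊆ (span k (Set.range g) : Set (Fin n → k)) := by
    intro lam hlam
    obtain ⟨t0, ht0⟩ := exists_ne_zero hlam.1
    have h1 : nu lam ∈ span k b := by
      rw [hbspan]
      exact subset_span (Set.mem_image_of_mem _ hlam)
    obtain ⟨N, f, gg, hsum⟩ := mem_span_set'.mp h1
    have h2 : colL t0 (nu lam) = ∑ i, f i • colL t0 ((gg i : Fin n → Fin n → k)) := by
      rw [← hsum, map_sum]
      exact Finset.sum_congr rfl fun i _ => by rw [map_smul]
    have h3 : lam t0 • lam ∈ span k (Set.range g) := by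
      rw [← colL_nu, h2]
      refine sum_mem fun i _ => smul_mem _ _ ?_
      have hggi : (gg i : Fin n → Fin n → k) = nu (g (gg i)) := (hg2 (gg i)).symm
      rw [hggi, colL_nu]
      exact smul_mem _ _ (subset_span ⟨gg i, rfl⟩)
    have h4 := smul_mem (span k (Set.range g)) (lam t0)⁻¹ h3
    rwa [smul_smul, inv_mul_cancel₀ ht0, one_smul] at h4
  have hm2 : finrank k (Lsp C) ≤ finrank k (span k (Set.range g)) :=
    Submodule.finrank_mono (span_le.mpr hZsub)
  have hm3 : finrank k (span k (Set.range g)) ≤ Fintype.card b :=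
    finrank_range_le_card g
  have hm5 : finrank k (Wsp C) = b.toFinset.card := by
    rw [Wsp, ← hbspan]
    exact finrank_span_set_eq_card hbli
  have hm4 : b.toFinset.card = Fintype.card b := Set.toFinset_card b
  omega
noncomputable def dd : ℕ := finrank k (Wsp C)

noncomputable def eW : Wsp C ≃ₗ[k] (Fin (dd C) → k) :=
  (Module.finBasis k (Wsp C)).equivFun

def extendZero {a b : ℕ} (h : a ≤ b) : (Fin a → k) →ₗ[k] (Fin b → k) where
  toFun v := fun i => if hi : (i : ℕ) < a then v ⟨i, hi⟩ else 0
  map_add' u v := by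
    funext i
    by_cases hi : (i : ℕ) < a <;> simp [hi]
  map_smul' c v := by
    funext i
    by_cases hi : (i : ℕ) < a <;> simp [hi]

lemma extendZero_eq_zero {a b : ℕ} (h : a ≤ b) {v : Fin a → k}
    (hv : extendZero (k := k) h v = 0) : v = 0 := by
  funext j
  have h2 := congrFun hv (Fin.castLE h j)
  simpa [extendZero, Fin.castLE] using h2

noncomputable def Lcompl : Submodule k (Fin n → k) :=
  Classical.choose (Submodule.exists_isCompl (Lsp C))

lemma Lcompl_isCompl : IsCompl (Lsp C) (Lcompl C) :=
  Classical.choose_spec (Submodule.exists_isCompl (Lsp C))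

noncomputable def pi0 : (Fin n → k) →ₗ[k] (Fin (dd C) → k) :=
  (extendZero (finrank_Lsp_le C : finrank k (Lsp C) ≤ dd C)).comp
    (((Module.finBasis k (Lsp C)).equivFun.toLinearMap).comp
      (Submodule.linearProjOfIsCompl _ _ (Lcompl_isCompl C)))

lemma pi0_eq_zero {u : Fin n → k} (hu : u ∈ Lsp C) (h0 : pi0 C u = 0) : u = 0 := by
  have h1 : Submodule.linearProjOfIsCompl _ _ (Lcompl_isCompl C) u = ⟨u, hu⟩ :=
    Submodule.linearProjOfIsCompl_apply_left (Lcompl_isCompl C) ⟨u, hu⟩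
  have h2 : extendZero (finrank_Lsp_le C : finrank k (Lsp C) ≤ dd C)
      ((Module.finBasis k (Lsp C)).equivFun ⟨u, hu⟩) = 0 := by
    have hd : pi0 C u = extendZero (finrank_Lsp_le C : finrank k (Lsp C) ≤ dd C)
        ((Module.finBasis k (Lsp C)).equivFun
          ((Submodule.linearProjOfIsCompl _ _ (Lcompl_isCompl C)) u)) := rfl
    rw [hd, h1] at h0
    exact h0
  have h3 := extendZero_eq_zero _ h2
  have h4 : (⟨u, hu⟩ : Lsp C) = 0 :=
    (LinearEquiv.map_eq_zero_iff _).mp h3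
  exact congrArg Subtype.val h4

lemma pi0_inj_on {u v : Fin n → k} (hu : u ∈ Lsp C) (hv : v ∈ Lsp C)
    (h : pi0 C u = pi0 C v) : u = v := by
  have h1 : pi0 C (u - v) = 0 := by rw [map_sub, h, sub_self]
  have h2 := pi0_eq_zero C (sub_mem hu hv) h1
  exact sub_eq_zero.mp h2

lemma pi0_ne_zero {u : Fin n → k} (hu : u ∈ Lsp C) (h : u ≠ 0) : pi0 C u ≠ 0 :=
  fun h0 => h (pi0_eq_zero C hu h0)

noncomputable def alpha (i : Fin n) : (Fin (dd C) → k) →ₗ[k] (Fin (dd C) → k) :=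
  (pi0 C).comp ((rowL i).comp (((Wsp C).subtype).comp (eW C).symm.toLinearMap))

lemma alpha_apply (i : Fin n) (v : Fin (dd C) → k) :
    alpha C i v = pi0 C (((eW C).symm v : Fin n → Fin n → k) i) := rfl

lemma alpha_reduced : (⨅ i, LinearMap.ker (alpha C i)) = ⊥ := by
  rw [eq_bot_iff]
  intro v hv
  simp only [Submodule.mem_iInf, LinearMap.mem_ker] at hv
  have hW : ((eW C).symm v : Fin n → Fin n → k) ∈ Wsp C := Submodule.coe_mem _
  have hrow : ∀ i, ((eW C).symm v : Fin n → Fin n → k) i = 0 := fun i =>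
    pi0_eq_zero C (Wsp_row C hW i) (hv i)
  have h1 : ((eW C).symm v : Fin n → Fin n → k) = 0 := funext hrow
  have h2 : (eW C).symm v = 0 := Subtype.ext h1
  have h3 : v = 0 := (LinearEquiv.map_eq_zero_iff _).mp h2
  simp [h3]

lemma mem_nu_Wsp {lam : Fin n → k} (hlam : lam ∈ Zset C) : nu lam ∈ Wsp C :=
  subset_span ⟨lam, hlam, rfl⟩

noncomputable def vOf (lam : Fin n → k) (hlam : lam ∈ Zset C) : Fin (dd C) → k :=
  eW C ⟨nu lam, mem_nu_Wsp C hlam⟩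

lemma pi0_lam_ne {lam : Fin n → k} (hlam : lam ∈ Zset C) : pi0 C lam ≠ 0 :=
  pi0_ne_zero C (subset_span hlam) hlam.1

lemma vOf_ne_zero {lam : Fin n → k} (hlam : lam ∈ Zset C) : vOf C lam hlam ≠ 0 := by
  intro h0
  have h1 : (⟨nu lam, mem_nu_Wsp C hlam⟩ : Wsp C) = 0 :=
    (LinearEquiv.map_eq_zero_iff _).mp h0
  exact nu_ne_zero hlam.1 (congrArg Subtype.val h1)

lemma alpha_vOf (i : Fin n) {lam : Fin n → k} (hlam : lam ∈ Zset C) :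
    alpha C i (vOf C lam hlam) = lam i • pi0 C lam := by
  rw [alpha_apply]
  have h1 : ((eW C).symm (vOf C lam hlam) : Fin n → Fin n → k) = nu lam := by
    simp [vOf]
  rw [h1]
  have h2 : nu lam i = lam i • lam := by
    funext t
    simp [nu, smul_eq_mul]
  rw [h2, map_smul]

lemma span_vOf {lam : Fin n → k} (hlam : lam ∈ Zset C) :
    finrank k (span k (Set.range fun i => alpha C i (vOf C lam hlam))) = 1 := by
  have hsp : span k (Set.range fun i => alpha C i (vOf C lam hlam))
      = span k {pi0 C lam} := by
    apply le_antisymm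
    · rw [span_le]
      rintro x ⟨i, rfl⟩
      dsimp only
      rw [alpha_vOf]
      exact smul_mem _ _ (mem_span_singleton_self _)
    · rw [span_le, Set.singleton_subset_iff]
      obtain ⟨i0, hi0⟩ := exists_ne_zero hlam.1
      have h1 : pi0 C lam = (lam i0)⁻¹ • (alpha C i0 (vOf C lam hlam)) := by
        rw [alpha_vOf, smul_smul, inv_mul_cancel₀ hi0, one_smul]
      rw [h1]
      exact smul_mem _ _ (subset_span ⟨i0, rfl⟩)
  rw [hsp]
  exact finrank_span_singleton (pi0_lam_ne C hlam)
lemma span_range_smul {a0 : ℕ} (f : Fin n → (Fin a0 → k)) (c : kˣ) :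
    span k (Set.range fun i => (c : k) • f i) = span k (Set.range f) := by
  apply le_antisymm <;> rw [span_le] <;> rintro x ⟨i, rfl⟩
  · exact smul_mem _ _ (subset_span ⟨i, rfl⟩)
  · have h1 : f i = (c : k)⁻¹ • ((c : k) • f i) := by
      rw [smul_smul, inv_mul_cancel₀ (Units.ne_zero c), one_smul]
    rw [h1]
    exact smul_mem _ _ (subset_span ⟨i, rfl⟩)

lemma eigen_structure {v : Fin (dd C) → k} (hv : v ≠ 0)
    (h1 : finrank k (span k (Set.range fun i => alpha C i v)) = 1) :
    ∃ lam, lam ∈ Zset C ∧ ∃ c : k, c ≠ 0 ∧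
      ((eW C).symm v : Fin n → Fin n → k) = c • nu lam := by
  set V : Fin n → Fin n → k := ((eW C).symm v : Fin n → Fin n → k) with hV
  have hVW : V ∈ Wsp C := Submodule.coe_mem _
  have hVrow : ∀ i, V i ∈ Lsp C := fun i => Wsp_row C hVW i
  obtain ⟨w0, hw0ne, hw0span⟩ := finrank_eq_one_iff'.mp h1
  have hsub : span k (Set.range fun i => alpha C i v)
      ≤ Submodule.map (pi0 C) (Lsp C) := by
    rw [span_le]
    rintro x ⟨i, rfl⟩
    exact ⟨V i, hVrow i, (alpha_apply C i v).symm⟩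
  obtain ⟨wh, hwhL, hwh⟩ := hsub w0.2
  have hwh0 : wh ≠ 0 := by
    intro h0
    apply hw0ne
    apply Subtype.ext
    rw [← hwh, h0, map_zero]
    rfl
  have hcoef : ∀ i, ∃ c : k, V i = c • wh := by
    intro i
    have hmem : alpha C i v ∈ span k (Set.range fun i => alpha C i v) :=
      subset_span ⟨i, rfl⟩
    obtain ⟨c, hc⟩ := hw0span ⟨alpha C i v, hmem⟩
    refine ⟨c, ?_⟩
    apply pi0_inj_on C (hVrow i) (smul_mem _ _ hwhL)
    have hc' : (c : k) • (w0 : Fin (dd C) → k) = alpha C i v := congrArg Subtype.val hc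
    rw [alpha_apply] at hc'
    rw [map_smul, hwh]
    exact hc'.symm
  choose lam hlam using hcoef
  have hVst : ∀ s t, V s t = lam s * wh t := by
    intro s t
    rw [congrFun (hlam s) t]
    simp [smul_eq_mul]
  have hlamne : lam ≠ 0 := by
    intro h0
    apply hv
    have hV0 : V = 0 := by
      funext s t
      rw [hVst s t, congrFun h0 s]
      simp
    have h2 : (eW C).symm v = 0 := Subtype.ext hV0
    exact (LinearEquiv.map_eq_zero_iff _).mp h2
  obtain ⟨t0, ht0⟩ := exists_ne_zero hwh0
  obtain ⟨s0, hs0⟩ := exists_ne_zero hlamne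
  have hsymm : ∀ s t, lam s * wh t = lam t * wh s := by
    intro s t
    have := Wsp_symm C hVW s t
    rwa [hVst s t, hVst t s] at this
  have hlamt0 : lam t0 ≠ 0 := by
    intro hz
    have h2 := hsymm s0 t0
    rw [hz, zero_mul] at h2
    exact (mul_ne_zero hs0 ht0) h2
  set mu := wh t0 * (lam t0)⁻¹ with hmu
  have hmune : mu ≠ 0 := mul_ne_zero ht0 (inv_ne_zero hlamt0)
  have hwhlam : ∀ s, wh s = mu * lam s := by
    intro s
    have h2 := hsymm s t0
    calc wh s = (lam t0 * wh s) * (lam t0)⁻¹ := by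
          field_simp
      _ = (lam s * wh t0) * (lam t0)⁻¹ := by rw [← h2]
      _ = mu * lam s := by rw [hmu]; ring
  refine ⟨lam, ⟨hlamne, ?_⟩, mu, hmune, ?_⟩
  · intro j
    have hq := Wsp_quad C hVW j
    have hrw : ∑ s, ∑ t, C j s t * V s t
        = mu * ∑ s, ∑ t, C j s t * (lam s * lam t) := by
      rw [Finset.mul_sum]
      refine Finset.sum_congr rfl fun s _ => ?_
      rw [Finset.mul_sum]
      refine Finset.sum_congr rfl fun t _ => ?_
      rw [hVst s t, hwhlam t]
      ring
    rw [hrw] at hq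
    exact (mul_eq_zero.mp hq).resolve_left hmune
  · funext s t
    rw [hVst s t, hwhlam t]
    simp only [Pi.smul_apply, smul_eq_mul, nu]
    ring
lemma vOf_eq_smul {lam : Fin n → k} (hlam : lam ∈ Zset C) (x : Fin (dd C) → k) (a : k)
    (h : a • ((eW C).symm x : Fin n → Fin n → k) = nu lam) :
    a • x = vOf C lam hlam := by
  have h1 : a • (eW C).symm x = (⟨nu lam, mem_nu_Wsp C hlam⟩ : Wsp C) := by
    apply Subtype.ext
    rw [Submodule.coe_smul]
    exact h
  calc a • x = eW C (a • (eW C).symm x) := by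
        rw [map_smul, (eW C).apply_symm_apply]
    _ = vOf C lam hlam := by rw [h1]; rfl

theorem master :
    ∃ (a : ℕ) (α : Fin n → ((Fin a → k) →ₗ[k] (Fin a → k))),
      (⨅ i, LinearMap.ker (α i)) = ⊥ ∧
      ∃ F : {x : Projectivization k (Fin a → k) |
                ∃ (v : Fin a → k) (hv : v ≠ 0), Projectivization.mk k v hv = x ∧
                  finrank k (span k (Set.range fun i => α i v)) = 1} ≃
            {y : Projectivization k (Fin n → k) |
                ∀ (lam : Fin n → k) (hlam : lam ≠ 0),
                  Projectivization.mk k lam hlam = y →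
                  ∀ j, ∑ s, ∑ t, C j s t * (lam s * lam t) = 0},
        ∀ (x : {x : Projectivization k (Fin a → k) |
                ∃ (v : Fin a → k) (hv : v ≠ 0), Projectivization.mk k v hv = x ∧
                  finrank k (span k (Set.range fun i => α i v)) = 1})
          (v : Fin a → k) (hv : v ≠ 0),
          Projectivization.mk k v hv = (x : Projectivization k (Fin a → k)) →
          ∀ (lam : Fin n → k) (hlam : lam ≠ 0),
            Projectivization.mk k lam hlam = (F x : Projectivization k (Fin n → k)) →
            ∃ w : Fin a → k, w ≠ 0 ∧ ∀ i, α i v = lam i • w := by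
  classical
  refine ⟨dd C, alpha C, alpha_reduced C, ?_⟩
  have hrepE : ∀ x : Projectivization k (Fin (dd C) → k),
      (∃ (v : Fin (dd C) → k) (hv : v ≠ 0), Projectivization.mk k v hv = x ∧
        finrank k (span k (Set.range fun i => alpha C i v)) = 1) →
      ∃ lam, lam ∈ Zset C ∧ ∃ c : k, c ≠ 0 ∧
        ((eW C).symm x.rep : Fin n → Fin n → k) = c • nu lam := by
    rintro x ⟨v, hv, hmk, h1⟩
    obtain ⟨u, hu⟩ := (Projectivization.mk_eq_mk_iff k _ _ x.rep_nonzero hv).mp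
      (by rw [Projectivization.mk_rep, hmk])
    have h2 : (fun i => alpha C i x.rep) = fun i => (u : k) • alpha C i v := by
      funext i
      rw [← hu, Units.smul_def, map_smul]
    have h1' : finrank k (span k (Set.range fun i => alpha C i x.rep)) = 1 := by
      rw [h2, span_range_smul (fun i => alpha C i v) u]
      exact h1
    exact eigen_structure C x.rep_nonzero h1'
  choose lamF hlamFZ cF hcFne hcFeq using hrepE
  have hZrep : ∀ y : Projectivization k (Fin n → k),
      (∀ (lam : Fin n → k) (hlam : lam ≠ 0), Projectivization.mk k lam hlam = y →
        ∀ j, ∑ s, ∑ t, C j s t * (lam s * lam t) = 0) →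
      y.rep ∈ Zset C := fun y hy =>
    ⟨y.rep_nonzero, fun j => hy y.rep y.rep_nonzero (Projectivization.mk_rep y) j⟩
  have hYmem : ∀ (x : Projectivization k (Fin (dd C) → k)) (hx : _),
      ∀ (lam' : Fin n → k) (hlam' : lam' ≠ 0),
        Projectivization.mk k lam' hlam' = Projectivization.mk k (lamF x hx) (hlamFZ x hx).1 →
        ∀ j, ∑ s, ∑ t, C j s t * (lam' s * lam' t) = 0 := by
    intro x hx lam' hlam' hmk' j
    obtain ⟨u, hu⟩ := (Projectivization.mk_eq_mk_iff k _ _ hlam' (hlamFZ x hx).1).mp hmk'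
    rw [← hu, Units.smul_def]
    exact (Zset_smul C (hlamFZ x hx) (Units.ne_zero u)).2 j
  refine ⟨⟨fun x => ⟨Projectivization.mk k (lamF x.1 x.2) (hlamFZ x.1 x.2).1,
            hYmem x.1 x.2⟩,
          fun y => ⟨Projectivization.mk k (vOf C y.1.rep (hZrep y.1 y.2))
              (vOf_ne_zero C (hZrep y.1 y.2)),
            ⟨vOf C y.1.rep (hZrep y.1 y.2), vOf_ne_zero C (hZrep y.1 y.2), rfl,
              span_vOf C (hZrep y.1 y.2)⟩⟩,
          ?_, ?_⟩, ?_⟩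
  · -- left inverse
    rintro ⟨X, hX⟩
    apply Subtype.ext
    dsimp only
    set lam0 := lamF X hX with hlam0def
    set c0 := cF X hX with hc0def
    have hc0 : c0 ≠ 0 := hcFne X hX
    have heq : ((eW C).symm X.rep : Fin n → Fin n → k) = c0 • nu lam0 := hcFeq X hX
    set Y := Projectivization.mk k lam0 (hlamFZ X hX).1 with hYdef
    obtain ⟨u, hu⟩ := (Projectivization.mk_eq_mk_iff k _ _ Y.rep_nonzero
      (hlamFZ X hX).1).mp (Projectivization.mk_rep Y)
    -- hu : u • lam0 = Y.rep
    conv_rhs => rw [← Projectivization.mk_rep X]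
    apply (Projectivization.mk_eq_mk_iff k _ _ _ X.rep_nonzero).mpr
    refine ⟨Units.mk0 ((u : k) * (u : k) * c0⁻¹)
      (mul_ne_zero (mul_ne_zero (Units.ne_zero u) (Units.ne_zero u)) (inv_ne_zero hc0)), ?_⟩
    rw [Units.smul_def]
    apply vOf_eq_smul
    show ((u : k) * (u : k) * c0⁻¹) • (((eW C).symm X.rep : Fin n → Fin n → k)) = nu Y.rep
    rw [heq, ← hu, Units.smul_def, nu_smul, smul_smul]
    congr 1
    field_simp
  · -- right inverse
    rintro ⟨Y, hY⟩
    apply Subtype.ext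
    dsimp only
    set lamY := Y.rep with hlamYdef
    set X := Projectivization.mk k (vOf C lamY (hZrep Y hY)) (vOf_ne_zero C (hZrep Y hY))
      with hXdef
    have hXmem : ∃ (v : Fin (dd C) → k) (hv : v ≠ 0), Projectivization.mk k v hv = X ∧
        finrank k (span k (Set.range fun i => alpha C i v)) = 1 :=
      ⟨vOf C lamY (hZrep Y hY), vOf_ne_zero C (hZrep Y hY), rfl, span_vOf C (hZrep Y hY)⟩
    obtain ⟨u, hu⟩ := (Projectivization.mk_eq_mk_iff k _ _ X.rep_nonzero
      (vOf_ne_zero C (hZrep Y hY))).mp (Projectivization.mk_rep X)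
    -- hu : u • vOf = X.rep
    have heq : ((eW C).symm X.rep : Fin n → Fin n → k) = cF X hXmem • nu (lamF X hXmem) :=
      hcFeq X hXmem
    have heq2 : ((eW C).symm X.rep : Fin n → Fin n → k) = (u : k) • nu lamY := by
      rw [← hu, Units.smul_def, map_smul]
      have h3 : (eW C).symm (vOf C lamY (hZrep Y hY)) = ⟨nu lamY, mem_nu_Wsp C (hZrep Y hY)⟩ := by
        rw [vOf]
        exact (eW C).symm_apply_apply _
      rw [h3]
      rfl
    have hprop : nu (lamF X hXmem) = ((cF X hXmem)⁻¹ * (u : k)) • nu lamY := by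
      rw [mul_smul, ← heq2, heq, ← mul_smul, inv_mul_cancel₀ (hcFne X hXmem), one_smul]
    obtain ⟨t, ht, hteq⟩ := nu_proportional (hlamFZ X hXmem).1 hprop
    have hgoal : Projectivization.mk k (lamF X hXmem) (hlamFZ X hXmem).1 = Y := by
      conv_rhs => rw [← Projectivization.mk_rep Y]
      apply (Projectivization.mk_eq_mk_iff k _ _ _ Y.rep_nonzero).mpr
      exact ⟨Units.mk0 t ht, hteq.symm⟩
    exact hgoal
  · -- eigenvalue property
    rintro ⟨X, hX⟩ v hv hmk lam hlam hmkF
    obtain ⟨uv, huv⟩ := (Projectivization.mk_eq_mk_iff k _ _ X.rep_nonzero hv).mp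
      (by rw [Projectivization.mk_rep, hmk])
    -- huv : uv • v = X.rep
    obtain ⟨ul, hul⟩ := (Projectivization.mk_eq_mk_iff k _ _ hlam (hlamFZ X hX).1).mp hmkF
    -- hul : ul • lamF = lam
    set lam0 := lamF X hX with hlam0def
    set c0 := cF X hX with hc0def
    refine ⟨((uv : k)⁻¹ * c0 * (ul : k)⁻¹) • pi0 C lam0,
      smul_ne_zero (mul_ne_zero (mul_ne_zero (inv_ne_zero (Units.ne_zero uv)) (hcFne X hX))
        (inv_ne_zero (Units.ne_zero ul))) (pi0_lam_ne C (hlamFZ X hX)), ?_⟩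
    intro i
    have hrowi : ((eW C).symm X.rep : Fin n → Fin n → k) i = (c0 * lam0 i) • lam0 := by
      rw [hcFeq X hX]
      funext t
      simp only [Pi.smul_apply, smul_eq_mul, nu]
      ring
    have h1 : alpha C i X.rep = (c0 * lam0 i) • pi0 C lam0 := by
      rw [alpha_apply, hrowi, map_smul]
    have h2 : alpha C i v = (uv : k)⁻¹ • alpha C i X.rep := by
      rw [← huv, Units.smul_def, map_smul, smul_smul, inv_mul_cancel₀ (Units.ne_zero uv),
        one_smul]
    have h3 : lam i = (ul : k) * lam0 i := by
      rw [← hul, Units.smul_def, Pi.smul_apply, smul_eq_mul]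
    rw [h2, h1, h3, smul_smul, smul_smul]
    congr 1
    field_simp
lemma degree_one_single {d : Fin n →₀ ℕ} (hd : d.degree = 1) :
    ∃ t, d = Finsupp.single t 1 := by
  have hne : d ≠ 0 := by
    intro h
    rw [h, map_zero] at hd
    omega
  obtain ⟨t, ht⟩ := Finsupp.ne_iff.mp hne
  have ht' : d t ≠ 0 := by simpa using ht
  have hle : d t ≤ 1 := hd ▸ Finsupp.le_degree t d
  refine ⟨t, ?_⟩
  ext a
  by_cases hat : a = t
  · subst hat
    rw [Finsupp.single_eq_same]
    omega
  · rw [Finsupp.single_eq_of_ne' (Ne.symm hat)]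
    by_contra hda
    have hsub : ({t, a} : Finset (Fin n)) ⊆ d.support := by
      intro x hx
      rw [Finset.mem_insert, Finset.mem_singleton] at hx
      rcases hx with rfl | rfl
      · exact Finsupp.mem_support_iff.mpr ht'
      · exact Finsupp.mem_support_iff.mpr hda
    have hsum : d t + d a ≤ d.degree := by
      rw [← Finset.sum_pair (show t ≠ a from fun h => hat h.symm)]
      exact Finset.sum_le_sum_of_subset hsub
    omega

lemma degree_two_decomp {d : Fin n →₀ ℕ} (hd : d.degree = 2) :
    ∃ s t, d = Finsupp.single s 1 + Finsupp.single t 1 := by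
  have hne : d ≠ 0 := by
    intro h
    rw [h, map_zero] at hd
    omega
  obtain ⟨s, hs⟩ := Finsupp.ne_iff.mp hne
  have hs' : d s ≠ 0 := by simpa using hs
  have hle : d s ≤ 2 := hd ▸ Finsupp.le_degree s d
  have hsplit : d = Finsupp.single s 1 + (d - Finsupp.single s 1) := by
    ext a
    rw [Finsupp.add_apply, Finsupp.tsub_apply]
    by_cases has : a = s
    · subst has
      rw [Finsupp.single_eq_same]
      omega
    · rw [Finsupp.single_eq_of_ne' (Ne.symm has)]
      omega
  have hsingledeg : (Finsupp.single s 1 : Fin n →₀ ℕ).degree = 1 := by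
    rw [Finsupp.degree_apply, Finsupp.support_single_ne_zero s one_ne_zero]
    simp
  have hdeg : (d - Finsupp.single s 1).degree = 1 := by
    have h2 : d.degree = (Finsupp.single s 1 : Fin n →₀ ℕ).degree
        + (d - Finsupp.single s 1).degree := by
      conv_lhs => rw [hsplit]
      simp only [Finsupp.degree_eq_weight_one]
      exact map_add _ _ _
    omega
  obtain ⟨t, ht⟩ := degree_one_single hdeg
  exact ⟨s, t, by rw [hsplit, ht]⟩

lemma exists_quad_coeffs (q : MvPolynomial (Fin n) k) (hq : q.IsHomogeneous 2) :
    ∃ C : Fin n → Fin n → k,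
      ∀ lam : Fin n → k, MvPolynomial.eval lam q = ∑ s, ∑ t, C s t * (lam s * lam t) := by
  classical
  have hdec : ∀ d ∈ q.support, ∃ s t, d = Finsupp.single s 1 + Finsupp.single t 1 := by
    intro d hd
    apply degree_two_decomp
    rw [Finsupp.degree_eq_weight_one]
    exact hq (MvPolynomial.mem_support_iff.mp hd)
  choose sd td hstd using hdec
  refine ⟨fun s t => ∑ d ∈ q.support.attach,
    if td d.1 d.2 = t ∧ sd d.1 d.2 = s then q.coeff d.1 else 0, ?_⟩
  intro lam
  have hsingle : ∀ s : Fin n,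
      (Finsupp.single s 1).prod (fun i e => lam i ^ e) = lam s := by
    intro s
    rw [Finsupp.prod_single_index (a := s) (b := 1) (h := fun i e => lam i ^ e)
      (pow_zero (lam s)), pow_one]
  have hprod : ∀ s t : Fin n,
      (Finsupp.single s 1 + Finsupp.single t 1).prod (fun i e => lam i ^ e)
        = lam s * lam t := by
    intro s t
    rw [Finsupp.prod_add_index' (fun a => pow_zero (lam a))
      (fun a b c => pow_add (lam a) b c), hsingle, hsingle]
  have key : ∀ d : {x // x ∈ q.support},
      MvPolynomial.eval lam (MvPolynomial.monomial d.1 (q.coeff d.1))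
        = q.coeff d.1 * (lam (sd d.1 d.2) * lam (td d.1 d.2)) := by
    intro d
    rw [MvPolynomial.eval_monomial]
    congr 1
    conv_lhs => rw [hstd d.1 d.2]
    exact hprod (sd d.1 d.2) (td d.1 d.2)
  calc MvPolynomial.eval lam q
      = ∑ d ∈ q.support, MvPolynomial.eval lam (MvPolynomial.monomial d (q.coeff d)) := by
        conv_lhs => rw [q.as_sum]
        rw [map_sum]
    _ = ∑ d ∈ q.support.attach,
          MvPolynomial.eval lam (MvPolynomial.monomial d.1 (q.coeff d.1)) :=
        (Finset.sum_attach q.support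
          (fun d => MvPolynomial.eval lam (MvPolynomial.monomial d (q.coeff d)))).symm
    _ = ∑ d ∈ q.support.attach, q.coeff d.1 * (lam (sd d.1 d.2) * lam (td d.1 d.2)) :=
        Finset.sum_congr rfl fun d _ => key d
    _ = ∑ s, ∑ t, (∑ d ∈ q.support.attach,
          if td d.1 d.2 = t ∧ sd d.1 d.2 = s then q.coeff d.1 else 0)
          * (lam s * lam t) := by
        symm
        calc ∑ s, ∑ t, (∑ d ∈ q.support.attach,
                if td d.1 d.2 = t ∧ sd d.1 d.2 = s then q.coeff d.1 else 0)
              * (lam s * lam t)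
            = ∑ s, ∑ t, ∑ d ∈ q.support.attach,
                (if td d.1 d.2 = t ∧ sd d.1 d.2 = s
                  then q.coeff d.1 * (lam s * lam t) else 0) := by
              refine Finset.sum_congr rfl fun s _ => Finset.sum_congr rfl fun t _ => ?_
              rw [Finset.sum_mul]
              refine Finset.sum_congr rfl fun d _ => ?_
              rw [ite_mul, zero_mul]
          _ = ∑ s, ∑ d ∈ q.support.attach, ∑ t : Fin n,
                (if td d.1 d.2 = t ∧ sd d.1 d.2 = s
                  then q.coeff d.1 * (lam s * lam t) else 0) :=
              Finset.sum_congr rfl fun s _ => Finset.sum_comm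
          _ = ∑ d ∈ q.support.attach, ∑ s, ∑ t,
                (if td d.1 d.2 = t ∧ sd d.1 d.2 = s
                  then q.coeff d.1 * (lam s * lam t) else 0) := Finset.sum_comm
          _ = ∑ d ∈ q.support.attach, q.coeff d.1 * (lam (sd d.1 d.2) * lam (td d.1 d.2)) := by
              refine Finset.sum_congr rfl fun d _ => ?_
              simp only [ite_and, Finset.sum_ite_eq, Finset.mem_univ, if_true]
end EigSqAux

open EigSqAux in

/-- square-matrix version of Theorem 1: over an algebraically
closed field `k`, for any homogeneous quadratic polynomials `q₁, …, q_m` in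
`X₁, …, X_n` there is a reduced matrix pencil `P = (a, a; α₁, …, α_n)`
consisting of square matrices and a bijection from `ε(P)` onto
the projective zero set `{(λ₁ : … : λ_n) ∈ ℙ(k^n) : q_j(λ) = 0 for all j}`
sending the class of an eigenvector to its eigenvalue. -/
theorem every_projective_variety_is_an_eigenvector_variety_of_square_pencil
    {k : Type*} [Field k] [IsAlgClosed k] {n m : ℕ}
    (q : Fin m → MvPolynomial (Fin n) k) (hq : ∀ j, (q j).IsHomogeneous 2) :
    ∃ (a : ℕ) (α : Fin n → ((Fin a → k) →ₗ[k] (Fin a → k))),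
      -- `P` is reduced
      (⨅ i, LinearMap.ker (α i)) = ⊥ ∧
      -- a bijection from `ε(P)` onto the projective zero set of `q₁, …, q_m`
      ∃ F : {x : Projectivization k (Fin a → k) |
                ∃ (v : Fin a → k) (hv : v ≠ 0), Projectivization.mk k v hv = x ∧
                  finrank k (span k (Set.range fun i => α i v)) = 1} ≃
            {y : Projectivization k (Fin n → k) |
                ∀ (lam : Fin n → k) (hlam : lam ≠ 0),
                  Projectivization.mk k lam hlam = y →
                  ∀ j, MvPolynomial.eval lam (q j) = 0},
        -- `F` sends the class of an eigenvector `v` to its eigenvalue: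
        -- for every representative `v` of `x` and every representative `lam`
        -- of `F x` there is `w ≠ 0` with `α_i(v) = lam_i • w` for all `i`
        ∀ (x : {x : Projectivization k (Fin a → k) |
                ∃ (v : Fin a → k) (hv : v ≠ 0), Projectivization.mk k v hv = x ∧
                  finrank k (span k (Set.range fun i => α i v)) = 1})
          (v : Fin a → k) (hv : v ≠ 0),
          Projectivization.mk k v hv = (x : Projectivization k (Fin a → k)) →
          ∀ (lam : Fin n → k) (hlam : lam ≠ 0),
            Projectivization.mk k lam hlam = (F x : Projectivization k (Fin n → k)) →
            ∃ w : Fin a → k, w ≠ 0 ∧ ∀ i, α i v = lam i • w := by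
  obtain ⟨C, hC⟩ : ∃ C : Fin m → Fin n → Fin n → k, ∀ j, ∀ lam : Fin n → k,
      MvPolynomial.eval lam (q j) = ∑ s, ∑ t, C j s t * (lam s * lam t) := by
    choose C hCj using fun j => exists_quad_coeffs (q j) (hq j)
    exact ⟨C, hCj⟩
  obtain ⟨a, α, hred, F, hF⟩ := master C
  refine ⟨a, α, hred, F.trans (Equiv.subtypeEquivRight ?_), ?_⟩
  · intro y
    constructor
    · intro h lam hlam hmk j
      rw [hC j lam]
      exact h lam hlam hmk j
    · intro h lam hlam hmk j
      have h2 := h lam hlam hmk j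
      rw [hC j lam] at h2
      exact h2
  · intro x v hv hmk lam hlam hmkF
    apply hF x v hv hmk lam hlam
    simpa using hmkF
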